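/- Let A be a complex n×n H-matrix, and let M and F be complex n×n matrices satisfying ⟨M⟩ − |M − A| = ⟨A⟩ and ⟨F⟩ − |F − A| = ⟨A⟩. Then M and F are invertible and the 2n×2n block matrix Q = [[0, I − M⁻¹A], [I − F⁻¹A, 0]] satisfies ρ(|Q|) < 1. -/

import Mathlib

open Matrix

/-- Spectral radius of a real square matrix: the supremum of the moduli of its
complex eigenvalues. -/
noncomputable def specRad {m : Type*} [Fintype m] [DecidableEq m]
    (A : Matrix m m ℝ) : ℝ :=
  sSup ((fun z : ℂ => ‖z‖) '' spectrum ℂ (A.map Complex.ofReal))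

/-- Entrywise absolute value (modulus) of a complex matrix. -/
noncomputable def cabs {m l : Type*} (A : Matrix m l ℂ) : Matrix m l ℝ :=
  fun i j => ‖A i j‖

/-- Comparison matrix of a complex square matrix. -/
noncomputable def compMat {m : Type*} [DecidableEq m]
    (A : Matrix m m ℂ) : Matrix m m ℝ :=
  fun i j => if i = j then ‖A i j‖ else -‖A i j‖

/-- M-matrix: there is `α` with `α I - A ≥ 0` entrywise and `α > ρ(α I - A)`. -/
def IsMMat {m : Type*} [Fintype m] [DecidableEq m]
    (A : Matrix m m ℝ) : Prop :=
  ∃ α : ℝ, (∀ i j, 0 ≤ (α • (1 : Matrix m m ℝ) - A) i j) ∧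
    specRad (α • (1 : Matrix m m ℝ) - A) < α

/-- H-matrix: a complex square matrix whose comparison matrix is an M-matrix. -/
def IsHMat {m : Type*} [Fintype m] [DecidableEq m]
    (A : Matrix m m ℂ) : Prop :=
  IsMMat (compMat A)

section helpers

variable {m : Type*} [Fintype m] [DecidableEq m]

lemma compMat_mulVec (Mc : Matrix m m ℂ) (u : m → ℝ) (i : m) :
    (compMat Mc *ᵥ u) i = ‖Mc i i‖ * u i
      - ∑ j ∈ Finset.univ.erase i, ‖Mc i j‖ * u j := by
  rw [mulVec, dotProduct, ← Finset.add_sum_erase _ _ (Finset.mem_univ i)]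
  simp only [compMat, if_pos rfl, sub_eq_add_neg, ← Finset.sum_neg_distrib]
  congr 1
  refine Finset.sum_congr rfl fun j hj => ?_
  rw [if_neg (Ne.symm (Finset.ne_of_mem_erase hj))]
  ring

lemma solve_bound (Mc : Matrix m m ℂ) (u : m → ℝ) (hu : ∀ i, 0 < u i)
    (hs : ∀ i, 0 < (compMat Mc *ᵥ u) i) (c' : ℝ) (v z : m → ℂ)
    (hv : Mc *ᵥ v = z) (hz : ∀ i, ‖z i‖ ≤ c' * (compMat Mc *ᵥ u) i) :
    ∀ i, ‖v i‖ ≤ c' * u i := by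
  cases isEmpty_or_nonempty m
  · intro i; exact absurd (IsEmpty.false i) not_false
  obtain ⟨i0, -, hmax⟩ := Finset.exists_max_image Finset.univ
    (fun i => ‖v i‖ / u i) ⟨Classical.arbitrary m, Finset.mem_univ _⟩
  set c : ℝ := ‖v i0‖ / u i0 with hc
  have hvc : ∀ i, ‖v i‖ ≤ c * u i := by
    intro i
    have := hmax i (Finset.mem_univ i)
    rw [div_le_iff₀ (hu i)] at this
    linarith [this]
  have hcle : c ≤ c' := by
    have hrow : Mc i0 i0 * v i0 = z i0 - ∑ j ∈ Finset.univ.erase i0, Mc i0 j * v j := by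
      have : ∑ j, Mc i0 j * v j = z i0 := by
        rw [← hv]; rfl
      rw [← this, ← Finset.add_sum_erase _ _ (Finset.mem_univ i0)]; ring
    have habs : ‖Mc i0 i0‖ * ‖v i0‖
        ≤ ‖z i0‖ + ∑ j ∈ Finset.univ.erase i0,
            ‖Mc i0 j‖ * (c * u j) := by
      rw [← norm_mul, hrow]
      refine (norm_sub_le _ _).trans ?_
      gcongr
      refine (norm_sum_le _ _).trans ?_
      refine Finset.sum_le_sum fun j _ => ?_
      rw [norm_mul]
      exact mul_le_mul_of_nonneg_left (hvc j) (norm_nonneg _)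
    have hsum : ∑ j ∈ Finset.univ.erase i0, ‖Mc i0 j‖ * (c * u j)
        = c * (‖Mc i0 i0‖ * u i0 - (compMat Mc *ᵥ u) i0) := by
      rw [compMat_mulVec]
      rw [sub_sub_cancel, Finset.mul_sum]
      refine Finset.sum_congr rfl fun j _ => by ring
    have hvi0 : ‖v i0‖ = c * u i0 := by
      rw [hc, div_mul_cancel₀ _ (hu i0).ne']
    rw [hvi0, hsum] at habs
    have hzb := hz i0
    have hs0 := hs i0
    nlinarith [habs, hzb, hs0]
  intro i
  exact (hvc i).trans (mul_le_mul_of_nonneg_right hcle (hu i).le)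

lemma isUnit_of_dd (Mc : Matrix m m ℂ) (u : m → ℝ) (hu : ∀ i, 0 < u i)
    (hs : ∀ i, 0 < (compMat Mc *ᵥ u) i) : IsUnit Mc := by
  rw [Matrix.isUnit_iff_isUnit_det, isUnit_iff_ne_zero]
  intro hdet
  obtain ⟨v, hv0, hv⟩ := Matrix.exists_mulVec_eq_zero_iff.mpr hdet
  have := solve_bound Mc u hu hs 0 v 0 hv (fun i => by simp)
  refine hv0 (funext fun i => ?_)
  have h := this i
  rw [zero_mul] at h
  simpa using le_antisymm h (norm_nonneg _)

lemma mem_spectrum_iff_eigen (B : Matrix m m ℂ) (z : ℂ) :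
    z ∈ spectrum ℂ B ↔ ∃ x, x ≠ 0 ∧ B *ᵥ x = z • x := by
  rw [spectrum.mem_iff, Matrix.isUnit_iff_isUnit_det, isUnit_iff_ne_zero, not_not,
    ← Matrix.exists_mulVec_eq_zero_iff]
  constructor
  · rintro ⟨v, hv0, hv⟩
    refine ⟨v, hv0, ?_⟩
    have h1 : (algebraMap ℂ (Matrix m m ℂ) z) *ᵥ v - B *ᵥ v = 0 := by
      rw [← Matrix.sub_mulVec, hv]
    have h2 : (algebraMap ℂ (Matrix m m ℂ) z) *ᵥ v = z • v := by
      rw [Algebra.algebraMap_eq_smul_one, Matrix.smul_mulVec, Matrix.one_mulVec]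
    rw [h2, sub_eq_zero] at h1
    exact h1.symm
  · rintro ⟨x, hx0, hx⟩
    refine ⟨x, hx0, ?_⟩
    rw [Matrix.sub_mulVec, Algebra.algebraMap_eq_smul_one, Matrix.smul_mulVec,
      Matrix.one_mulVec, hx, sub_self]

lemma specRad_le_of_posVec (P : Matrix m m ℝ) (hP : ∀ i j, 0 ≤ P i j)
    (w : m → ℝ) (hw : ∀ i, 0 < w i) (θ : ℝ) (hθ : 0 ≤ θ)
    (hPw : ∀ i, (P *ᵥ w) i ≤ θ * w i) : specRad P ≤ θ := by
  refine Real.sSup_le ?_ hθ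
  rintro y ⟨z, hz, rfl⟩
  obtain ⟨x, hx0, hx⟩ := (mem_spectrum_iff_eigen _ _).mp hz
  cases isEmpty_or_nonempty m
  · exact absurd (Subsingleton.elim x 0) hx0
  obtain ⟨i0, -, hmax⟩ := Finset.exists_max_image Finset.univ
    (fun i => ‖x i‖ / w i) ⟨Classical.arbitrary m, Finset.mem_univ _⟩
  set c : ℝ := ‖x i0‖ / w i0 with hc
  have hxc : ∀ i, ‖x i‖ ≤ c * w i := by
    intro i
    have := hmax i (Finset.mem_univ i)
    rw [div_le_iff₀ (hw i)] at this
    linarith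
  have hcpos : 0 < c := by
    rcases Function.ne_iff.mp hx0 with ⟨j, hj⟩
    have h1 : 0 < ‖x j‖ := norm_pos_iff.mpr hj
    have := hxc j
    nlinarith [hw j]
  have hxi0 : ‖x i0‖ = c * w i0 := by
    rw [hc, div_mul_cancel₀ _ (hw i0).ne']
  have hrow : ‖z‖ * ‖x i0‖ ≤ c * (θ * w i0) := by
    have h1 : z * x i0 = ∑ j, (P i0 j : ℂ) * x j := by
      have := congrFun hx i0
      rw [Pi.smul_apply, smul_eq_mul] at this
      rw [← this, Matrix.mulVec, dotProduct]
      rfl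
    have h2 : ‖z * x i0‖ ≤ ∑ j, P i0 j * ‖x j‖ := by
      rw [h1]
      refine (norm_sum_le _ _).trans ?_
      refine Finset.sum_le_sum fun j _ => ?_
      rw [norm_mul, Complex.norm_real, Real.norm_eq_abs, abs_of_nonneg (hP i0 j)]
    rw [norm_mul] at h2
    refine h2.trans ?_
    have h3 : ∑ j, P i0 j * ‖x j‖ ≤ c * ∑ j, P i0 j * w j := by
      rw [Finset.mul_sum]
      refine Finset.sum_le_sum fun j _ => ?_
      calc P i0 j * ‖x j‖ ≤ P i0 j * (c * w j) :=
            mul_le_mul_of_nonneg_left (hxc j) (hP i0 j)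
        _ = c * (P i0 j * w j) := by ring
    refine h3.trans ?_
    exact mul_le_mul_of_nonneg_left (hPw i0) hcpos.le
  rw [hxi0] at hrow
  exact le_of_mul_le_mul_right
    (by linarith [hrow] : ‖z‖ * (c * w i0) ≤ θ * (c * w i0)) (mul_pos hcpos (hw i0))

end helpers

section analytic

open Filter

attribute [local instance] Matrix.linftyOpNormedAddCommGroup Matrix.linftyOpNormedRing
  Matrix.linftyOpNormedAlgebra

variable {m : Type*} [Fintype m] [DecidableEq m] [Nonempty m]

noncomputable def matCompl {m : Type*} [Fintype m] [DecidableEq m] :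
    CompleteSpace (Matrix m m ℂ) := FiniteDimensional.complete ℂ _

attribute [local instance] matCompl

omit [Nonempty m] in
lemma row_sum_le_norm (B : Matrix m m ℂ) (i : m) : ∑ j, ‖B i j‖ ≤ ‖B‖ := by
  rw [Matrix.linfty_opNorm_def]
  calc ∑ j, ‖B i j‖ = ((∑ j, ‖B i j‖₊ : NNReal) : ℝ) := by
        push_cast [coe_nnnorm]; rfl
    _ ≤ _ := by
        exact_mod_cast NNReal.coe_le_coe.mpr
          (Finset.le_sup (f := fun i => ∑ j, ‖B i j‖₊) (Finset.mem_univ i))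

lemma bddAbove_spec (B : Matrix m m ℂ) :
    BddAbove ((fun z : ℂ => ‖z‖) '' spectrum ℂ B) := by
  refine ⟨‖B‖, ?_⟩
  rintro y ⟨z, hz, rfl⟩
  simpa using spectrum.norm_le_norm_of_mem hz

lemma specRad_nonneg (N : Matrix m m ℝ) : 0 ≤ specRad N := by
  obtain ⟨z, hz⟩ := spectrum.nonempty (N.map Complex.ofReal)
  exact le_trans (norm_nonneg z)
    (le_csSup (bddAbove_spec _) ⟨z, hz, rfl⟩)

lemma norm_pow_eventually_le (N : Matrix m m ℝ) {α : ℝ} (hα : specRad N < α) :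
    0 < α ∧ ∃ r : ℝ, 0 ≤ r ∧ r < α ∧
      ∀ᶠ k in atTop, ‖(N.map Complex.ofReal) ^ k‖ ≤ r ^ k := by
  set B := N.map Complex.ofReal with hB
  have hρ0 : 0 ≤ specRad N := specRad_nonneg N
  have hα0 : 0 < α := lt_of_le_of_lt hρ0 hα
  refine ⟨hα0, (specRad N + α) / 2, by linarith, by linarith, ?_⟩
  set r : ℝ := (specRad N + α) / 2 with hrdef
  have hr0 : 0 < r := by simp only [hrdef]; linarith
  have hρr : specRad N < r := by simp only [hrdef]; linarith
  have hsr : spectralRadius ℂ B ≤ ENNReal.ofReal (specRad N) := by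
    rw [spectralRadius]
    refine iSup₂_le fun z hz => ?_
    rw [← enorm_eq_nnnorm, ← ofReal_norm]
    refine ENNReal.ofReal_le_ofReal ?_
    exact le_csSup (bddAbove_spec _) ⟨z, hz, rfl⟩
  have hlt : spectralRadius ℂ B < ENNReal.ofReal r :=
    lt_of_le_of_lt hsr ((ENNReal.ofReal_lt_ofReal_iff hr0).mpr hρr)
  have hev := (spectrum.pow_nnnorm_pow_one_div_tendsto_nhds_spectralRadius B).eventually_lt_const hlt
  filter_upwards [hev, eventually_ge_atTop 1] with k hk hk1
  have hkne : (k : ℝ) ≠ 0 := by positivity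
  have h1 : (‖B ^ k‖₊ : ENNReal) = ((‖B ^ k‖₊ : ENNReal) ^ (1 / (k:ℝ))) ^ (k : ℝ) := by
    rw [← ENNReal.rpow_mul, one_div_mul_cancel hkne, ENNReal.rpow_one]
  have h2 : (‖B ^ k‖₊ : ENNReal) ≤ (ENNReal.ofReal r) ^ (k : ℝ) := by
    rw [h1]
    exact ENNReal.rpow_le_rpow hk.le (by positivity)
  rw [ENNReal.rpow_natCast, ← ENNReal.ofReal_pow hr0.le, ← enorm_eq_nnnorm, ← ofReal_norm] at h2
  exact (ENNReal.ofReal_le_ofReal_iff (by positivity)).mp h2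

lemma exists_posVec (N : Matrix m m ℝ) (hN : ∀ i j, 0 ≤ N i j) {α : ℝ}
    (hα : specRad N < α) :
    ∃ u : m → ℝ, (∀ i, 0 < u i) ∧
      ((α • (1 : Matrix m m ℝ) - N) *ᵥ u) = fun _ => (1:ℝ) := by
  obtain ⟨hα0, r, hr0, hrα, hev⟩ := norm_pow_eventually_le N hα
  set T : Matrix m m ℝ := α • (1 : Matrix m m ℝ) - N with hT
  have hdet : IsUnit T.det := by
    rw [isUnit_iff_ne_zero]
    intro h0
    have hmap : T.map Complex.ofReal = Complex.ofRealHom.mapMatrix T := rfl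
    have hdetC : (T.map Complex.ofReal).det = (T.det : ℂ) := by
      rw [hmap, ← RingHom.map_det]; rfl
    have hTC : T.map Complex.ofReal
        = algebraMap ℂ (Matrix m m ℂ) (α : ℂ) - N.map Complex.ofReal := by
      rw [Algebra.algebraMap_eq_smul_one]
      ext i j
      by_cases h : i = j <;> simp [hT, Matrix.map_apply, Matrix.one_apply, h]
    have hmem : (α : ℂ) ∈ spectrum ℂ (N.map Complex.ofReal) := by
      rw [spectrum.mem_iff, Matrix.isUnit_iff_isUnit_det, isUnit_iff_ne_zero, not_not, ← hTC,
        hdetC, h0, Complex.ofReal_zero]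
    have hle : ‖(α : ℂ)‖ ≤ specRad N := le_csSup (bddAbove_spec _) ⟨_, hmem, rfl⟩
    rw [Complex.norm_real, Real.norm_eq_abs, abs_of_pos hα0] at hle
    linarith
  set one1 : m → ℝ := fun _ => (1:ℝ) with hone
  set u : m → ℝ := T⁻¹ *ᵥ one1 with hu
  have hTu : T *ᵥ u = one1 := by
    rw [hu, Matrix.mulVec_mulVec, Matrix.mul_nonsing_inv _ hdet, Matrix.one_mulVec]
  clear_value u
  have hrec : ∀ j, u j = α⁻¹ * (1 + (N *ᵥ u) j) := by
    intro j
    have h1 := congrFun hTu j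
    rw [hT, Matrix.sub_mulVec, Matrix.smul_mulVec, Matrix.one_mulVec] at h1
    have h2 : α * u j - (N *ᵥ u) j = 1 := h1
    field_simp
    linarith
  have hNk : ∀ k : ℕ, ∀ i j, 0 ≤ (N ^ k) i j := by
    intro k
    induction k with
    | zero => intro i j; by_cases h : i = j <;> simp [Matrix.one_apply, h]
    | succ k ih =>
        intro i j
        rw [pow_succ, Matrix.mul_apply]
        exact Finset.sum_nonneg fun l _ => mul_nonneg (ih i l) (hN l j)
  have hvk : ∀ k : ℕ, ∀ i, 0 ≤ (N ^ k *ᵥ one1) i := by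
    intro k i
    rw [Matrix.mulVec, dotProduct]
    exact Finset.sum_nonneg fun l _ => mul_nonneg (hNk k i l) zero_le_one
  have key : ∀ K : ℕ, ∀ i, u i
      = (∑ k ∈ Finset.range K, α⁻¹ ^ (k+1) * ((N ^ k *ᵥ one1) i))
        + α⁻¹ ^ K * ((N ^ K *ᵥ u) i) := by
    intro K
    induction K with
    | zero => intro i; simp [Matrix.one_mulVec]
    | succ K ih =>
        intro i
        rw [Finset.sum_range_succ]
        have hsub : (N ^ K *ᵥ u) i
            = α⁻¹ * ((N ^ K *ᵥ one1) i + (N ^ (K+1) *ᵥ u) i) := by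
          have e3 : (N ^ (K+1) *ᵥ u) = N ^ K *ᵥ (N *ᵥ u) := by
            rw [Matrix.mulVec_mulVec, ← pow_succ]
          rw [e3]
          have e1 : (N ^ K *ᵥ u) i = ∑ j, (N ^ K) i j * u j := rfl
          have e2 : (N ^ K *ᵥ one1) i = ∑ j, (N ^ K) i j * 1 := rfl
          have e4 : (N ^ K *ᵥ (N *ᵥ u)) i = ∑ j, (N ^ K) i j * ((N *ᵥ u) j) := rfl
          rw [e1, e2, e4, mul_add, Finset.mul_sum, Finset.mul_sum, ← Finset.sum_add_distrib]
          refine Finset.sum_congr rfl fun j _ => ?_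
          rw [hrec j]; ring
        rw [ih i, hsub]; ring
  have hU0 : (0:ℝ) ≤ ‖u‖ := norm_nonneg u
  have htail : ∀ k : ℕ, ∀ i, |(N ^ k *ᵥ u) i| ≤ ‖(N.map Complex.ofReal) ^ k‖ * ‖u‖ := by
    intro k i
    have e1 : (N ^ k *ᵥ u) i = ∑ j, (N ^ k) i j * u j := rfl
    rw [e1]
    refine (Finset.abs_sum_le_sum_abs _ _).trans ?_
    have hb : ∀ j, |(N ^ k) i j * u j| ≤ (N ^ k) i j * ‖u‖ := by
      intro j
      rw [abs_mul, abs_of_nonneg (hNk k i j)]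
      exact mul_le_mul_of_nonneg_left
        (by rw [← Real.norm_eq_abs]; exact norm_le_pi_norm u j) (hNk k i j)
    refine (Finset.sum_le_sum fun j _ => hb j).trans ?_
    rw [← Finset.sum_mul]
    refine mul_le_mul_of_nonneg_right ?_ hU0
    have e2 : ∑ j, (N ^ k) i j = ∑ j, ‖((N.map Complex.ofReal) ^ k) i j‖ := by
      refine Finset.sum_congr rfl fun j _ => ?_
      have hm : (N.map Complex.ofReal) ^ k = (N ^ k).map Complex.ofReal := by
        have h : ∀ P : Matrix m m ℝ, P.map Complex.ofReal = Complex.ofRealHom.mapMatrix P :=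
          fun P => rfl
        rw [h, h, map_pow]
      rw [hm, Matrix.map_apply, Complex.norm_real, Real.norm_eq_abs, abs_of_nonneg (hNk k i j)]
    rw [e2]
    exact row_sum_le_norm _ i
  have hui : ∀ i, α⁻¹ ≤ u i := by
    intro i
    refine le_of_forall_pos_le_add ?_
    intro ε hε
    have hr1 : r / α < 1 := (div_lt_one hα0).mpr hrα
    have hr2 : 0 ≤ r / α := div_nonneg hr0 hα0.le
    have htend : Filter.Tendsto (fun K : ℕ => ‖u‖ * (r / α) ^ K) atTop (nhds 0) := by
      have h := tendsto_pow_atTop_nhds_zero_of_lt_one hr2 hr1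
      simpa using h.const_mul ‖u‖
    have hevK : ∀ᶠ K in atTop, ‖u‖ * (r / α) ^ K < ε := htend.eventually_lt_const hε
    obtain ⟨K, hK1, hKb, hKe⟩ := ((eventually_ge_atTop 1).and (hev.and hevK)).exists
    have hkey := key K i
    have hpart : α⁻¹ ≤ ∑ k ∈ Finset.range K, α⁻¹ ^ (k+1) * ((N ^ k *ᵥ one1) i) := by
      have h0 : α⁻¹ ^ (0+1) * ((N ^ 0 *ᵥ one1) i) = α⁻¹ := by
        simp [Matrix.one_mulVec, hone]
      calc α⁻¹ = α⁻¹ ^ (0+1) * ((N ^ 0 *ᵥ one1) i) := h0.symm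
        _ ≤ _ := Finset.single_le_sum (f := fun k => α⁻¹ ^ (k+1) * ((N ^ k *ᵥ one1) i))
            (fun k _ => mul_nonneg (pow_nonneg (inv_nonneg.mpr hα0.le) _) (hvk k i))
            (Finset.mem_range.mpr hK1)
    have htb : |α⁻¹ ^ K * ((N ^ K *ᵥ u) i)| ≤ ‖u‖ * (r / α) ^ K := by
      rw [abs_mul, abs_pow, abs_inv, abs_of_pos hα0]
      calc α⁻¹ ^ K * |(N ^ K *ᵥ u) i|
            ≤ α⁻¹ ^ K * (‖(N.map Complex.ofReal) ^ K‖ * ‖u‖) :=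
            mul_le_mul_of_nonneg_left (htail K i) (by positivity)
        _ ≤ α⁻¹ ^ K * (r ^ K * ‖u‖) :=
            mul_le_mul_of_nonneg_left
              (mul_le_mul_of_nonneg_right hKb hU0) (by positivity)
        _ = ‖u‖ * (r / α) ^ K := by
            rw [div_pow, inv_pow]
            field_simp
    nlinarith [neg_abs_le (α⁻¹ ^ K * ((N ^ K *ᵥ u) i)), htb, hKe, hpart, hkey]
  exact ⟨u, fun i => lt_of_lt_of_le (inv_pos.mpr hα0) (hui i), hTu⟩

end analytic

theorem stmt15 {n : ℕ} (A M F : Matrix (Fin n) (Fin n) ℂ)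
    (hA : IsHMat A)
    (hM : compMat M - cabs (M - A) = compMat A)
    (hF : compMat F - cabs (F - A) = compMat A) :
    IsUnit M ∧ IsUnit F ∧
      specRad (cabs (Matrix.fromBlocks 0 (1 - M⁻¹ * A) (1 - F⁻¹ * A) 0)) < 1 := by
  rcases Nat.eq_zero_or_pos n with hn | hn
  · subst hn
    have hdet0 : ∀ (X : Matrix (Fin 0) (Fin 0) ℂ), IsUnit X := by
      intro X
      rw [Matrix.isUnit_iff_isUnit_det, Matrix.det_fin_zero]
      exact isUnit_one
    refine ⟨hdet0 M, hdet0 F, ?_⟩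
    have hspec : spectrum ℂ
        ((cabs (Matrix.fromBlocks 0 (1 - M⁻¹ * A) (1 - F⁻¹ * A) 0)).map Complex.ofReal) = ∅ := by
      ext z
      simp only [spectrum.mem_iff, Set.mem_empty_iff_false, iff_false, not_not]
      rw [Matrix.isUnit_iff_isUnit_det, Matrix.det_isEmpty]
      exact isUnit_one
    rw [specRad, hspec]
    simp [Real.sSup_empty]
  · have hne : Nonempty (Fin n) := ⟨⟨0, hn⟩⟩
    obtain ⟨α, hα1, hα2⟩ := hA
    set N : Matrix (Fin n) (Fin n) ℝ :=
      α • (1 : Matrix (Fin n) (Fin n) ℝ) - compMat A with hNdef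
    obtain ⟨u, hu, hTu⟩ := exists_posVec N hα1 hα2
    have hCA : α • (1 : Matrix (Fin n) (Fin n) ℝ) - N = compMat A := by
      rw [hNdef, sub_sub_cancel]
    rw [hCA] at hTu
    have hcabs_nn : ∀ (X : Matrix (Fin n) (Fin n) ℂ) i j, 0 ≤ cabs X i j :=
      fun X i j => norm_nonneg _
    have hd_nn : ∀ (X : Matrix (Fin n) (Fin n) ℂ) i, 0 ≤ (cabs X *ᵥ u) i := by
      intro X i
      rw [Matrix.mulVec, dotProduct]
      exact Finset.sum_nonneg fun j _ => mul_nonneg (hcabs_nn X i j) (hu j).le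
    have hMA : compMat M = compMat A + cabs (M - A) := by rw [← hM, sub_add_cancel]
    have hFA : compMat F = compMat A + cabs (F - A) := by rw [← hF, sub_add_cancel]
    have hsM : ∀ i, (compMat M *ᵥ u) i = 1 + (cabs (M - A) *ᵥ u) i := by
      intro i
      rw [hMA, Matrix.add_mulVec, Pi.add_apply, hTu]
    have hsF : ∀ i, (compMat F *ᵥ u) i = 1 + (cabs (F - A) *ᵥ u) i := by
      intro i
      rw [hFA, Matrix.add_mulVec, Pi.add_apply, hTu]
    have hsM_pos : ∀ i, 0 < (compMat M *ᵥ u) i := by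
      intro i; rw [hsM i]; linarith [hd_nn (M - A) i]
    have hsF_pos : ∀ i, 0 < (compMat F *ᵥ u) i := by
      intro i; rw [hsF i]; linarith [hd_nn (F - A) i]
    have hMu : IsUnit M := isUnit_of_dd M u hu hsM_pos
    have hFu : IsUnit F := isUnit_of_dd F u hu hsF_pos
    refine ⟨hMu, hFu, ?_⟩
    set θM : ℝ := Finset.univ.sup' Finset.univ_nonempty
      (fun i => (cabs (M - A) *ᵥ u) i / (compMat M *ᵥ u) i) with hθM
    set θF : ℝ := Finset.univ.sup' Finset.univ_nonempty
      (fun i => (cabs (F - A) *ᵥ u) i / (compMat F *ᵥ u) i) with hθF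
    set θ : ℝ := max θM θF with hθ
    have hθMb : ∀ i, (cabs (M - A) *ᵥ u) i / (compMat M *ᵥ u) i ≤ θM := by
      intro i; rw [hθM]
      exact Finset.le_sup' (f := fun i => (cabs (M - A) *ᵥ u) i / (compMat M *ᵥ u) i)
        (Finset.mem_univ i)
    have hθFb : ∀ i, (cabs (F - A) *ᵥ u) i / (compMat F *ᵥ u) i ≤ θF := by
      intro i; rw [hθF]
      exact Finset.le_sup' (f := fun i => (cabs (F - A) *ᵥ u) i / (compMat F *ᵥ u) i)
        (Finset.mem_univ i)
    have hθM0 : 0 ≤ θM := le_trans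
      (div_nonneg (hd_nn _ (Classical.arbitrary (Fin n))) (hsM_pos _).le)
      (hθMb (Classical.arbitrary (Fin n)))
    have hθ0 : 0 ≤ θ := le_trans hθM0 (le_max_left _ _)
    have hθM1 : θM < 1 := by
      rw [hθM, Finset.sup'_lt_iff]
      intro i _
      rw [div_lt_one (hsM_pos i), hsM i]
      linarith [hd_nn (M - A) i]
    have hθF1 : θF < 1 := by
      rw [hθF, Finset.sup'_lt_iff]
      intro i _
      rw [div_lt_one (hsF_pos i), hsF i]
      linarith [hd_nn (F - A) i]
    have hθ1 : θ < 1 := max_lt hθM1 hθF1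
    have hdM : ∀ i, (cabs (M - A) *ᵥ u) i ≤ θ * (compMat M *ᵥ u) i := by
      intro i
      have h1 := le_trans (hθMb i) (le_max_left θM θF)
      rw [div_le_iff₀ (hsM_pos i)] at h1
      rw [hθ]; linarith
    have hdF : ∀ i, (cabs (F - A) *ᵥ u) i ≤ θ * (compMat F *ᵥ u) i := by
      intro i
      have h1 := le_trans (hθFb i) (le_max_right θM θF)
      rw [div_le_iff₀ (hsF_pos i)] at h1
      rw [hθ]; linarith
    have hkey : ∀ (X : Matrix (Fin n) (Fin n) ℂ), IsUnit X →
        (∀ i, 0 < (compMat X *ᵥ u) i) →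
        (∀ i, (cabs (X - A) *ᵥ u) i ≤ θ * (compMat X *ᵥ u) i) →
        ∀ i, (cabs (1 - X⁻¹ * A) *ᵥ u) i ≤ θ * u i := by
      intro X hXu hsX hdX i
      set G : Matrix (Fin n) (Fin n) ℂ := 1 - X⁻¹ * A with hG
      set zv : Fin n → ℂ := fun j => (u j : ℂ) *
        (if G i j = 0 then 1 else (starRingEnd ℂ) (G i j) / (‖G i j‖ : ℂ)) with hzv
      have habsz : ∀ j, ‖zv j‖ = u j := by
        intro j
        simp only [hzv]
        by_cases h : G i j = 0
        · simp [h, Complex.norm_real, Real.norm_eq_abs, abs_of_pos (hu j)]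
        · have hpos : 0 < ‖G i j‖ := norm_pos_iff.mpr h
          rw [if_neg h]
          simp [norm_mul, norm_div, Complex.norm_conj, Complex.norm_real, Real.norm_eq_abs,
            abs_of_pos (hu j), abs_of_nonneg (norm_nonneg (G i j)),
            div_self hpos.ne']
      have hGz : (G *ᵥ zv) i = (((cabs G *ᵥ u) i : ℝ) : ℂ) := by
        have e1 : (G *ᵥ zv) i = ∑ j, G i j * zv j := rfl
        have e2 : (((cabs G *ᵥ u) i : ℝ) : ℂ) = ∑ j, (‖G i j‖ : ℂ) * (u j : ℂ) := by
          have : ((cabs G *ᵥ u) i : ℝ) = ∑ j, ‖G i j‖ * u j := rfl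
          rw [this]
          push_cast
          rfl
        rw [e1, e2]
        refine Finset.sum_congr rfl fun j _ => ?_
        simp only [hzv]
        by_cases h : G i j = 0
        · simp [h]
        · rw [if_neg h]
          have habs0 : (‖G i j‖ : ℂ) ≠ 0 := by
            simpa using h
          have h2 : G i j * (starRingEnd ℂ) (G i j) = ((‖G i j‖ : ℂ))^2 := by
            rw [Complex.mul_conj]
            norm_cast
            exact (Complex.sq_norm _).symm
          field_simp
          linear_combination ((u j : ℝ) : ℂ) * h2
      have hXG : X * G = X - A := by
        rw [hG, Matrix.mul_sub, Matrix.mul_one, ← Matrix.mul_assoc,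
          Matrix.mul_nonsing_inv _ ((Matrix.isUnit_iff_isUnit_det X).mp hXu), Matrix.one_mul]
      have hMv : X *ᵥ (G *ᵥ zv) = (X - A) *ᵥ zv := by
        rw [Matrix.mulVec_mulVec, hXG]
      have hzb : ∀ i', ‖((X - A) *ᵥ zv) i'‖ ≤ θ * ((compMat X *ᵥ u) i') := by
        intro i'
        have e1 : ((X - A) *ᵥ zv) i' = ∑ j, (X - A) i' j * zv j := rfl
        rw [e1]
        refine le_trans (norm_sum_le _ _) ?_
        have e2 : ∀ j, ‖(X - A) i' j * zv j‖ = cabs (X - A) i' j * u j := by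
          intro j; rw [norm_mul, habsz j]; rfl
        rw [Finset.sum_congr rfl fun j _ => e2 j]
        exact hdX i'
      have hb := solve_bound X u hu hsX θ (G *ᵥ zv) ((X - A) *ᵥ zv) hMv hzb i
      have habsv : ‖(G *ᵥ zv) i‖ = (cabs G *ᵥ u) i := by
        rw [hGz, Complex.norm_real, Real.norm_eq_abs, abs_of_nonneg (hd_nn G i)]
      rw [habsv] at hb
      exact hb
    have hGM := hkey M hMu hsM_pos hdM
    have hGF := hkey F hFu hsF_pos hdF
    set P := cabs (Matrix.fromBlocks 0 (1 - M⁻¹ * A) (1 - F⁻¹ * A) 0) with hP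
    have hPnn : ∀ i j, 0 ≤ P i j := fun i j => norm_nonneg _
    set w : Fin n ⊕ Fin n → ℝ := Sum.elim u u with hw
    have hwpos : ∀ i, 0 < w i := by rintro (i | i) <;> exact hu i
    have hPw : ∀ i, (P *ᵥ w) i ≤ θ * w i := by
      rintro (i | i)
      · have e1 : (P *ᵥ w) (Sum.inl i) = ∑ j : Fin n, P (Sum.inl i) (Sum.inl j) * u j
            + ∑ j : Fin n, P (Sum.inl i) (Sum.inr j) * u j := by
          rw [Matrix.mulVec, dotProduct, Fintype.sum_sum_type]; rfl
        have e2 : ∀ j, P (Sum.inl i) (Sum.inl j) = 0 := by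
          intro j; simp [hP, cabs, Matrix.fromBlocks_apply₁₁]
        have e3 : ∀ j, P (Sum.inl i) (Sum.inr j) = cabs (1 - M⁻¹ * A) i j := by
          intro j; simp [hP, cabs, Matrix.fromBlocks_apply₁₂]
        have s1 : ∑ j : Fin n, P (Sum.inl i) (Sum.inl j) * u j = 0 :=
          Finset.sum_eq_zero fun j _ => by rw [e2 j, zero_mul]
        have s2 : ∑ j : Fin n, P (Sum.inl i) (Sum.inr j) * u j
            = ∑ j : Fin n, cabs (1 - M⁻¹ * A) i j * u j :=
          Finset.sum_congr rfl fun j _ => by rw [e3 j]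
        rw [e1, s1, s2, zero_add]
        exact hGM i
      · have e1 : (P *ᵥ w) (Sum.inr i) = ∑ j : Fin n, P (Sum.inr i) (Sum.inl j) * u j
            + ∑ j : Fin n, P (Sum.inr i) (Sum.inr j) * u j := by
          rw [Matrix.mulVec, dotProduct, Fintype.sum_sum_type]; rfl
        have e2 : ∀ j, P (Sum.inr i) (Sum.inr j) = 0 := by
          intro j; simp [hP, cabs, Matrix.fromBlocks_apply₂₂]
        have e3 : ∀ j, P (Sum.inr i) (Sum.inl j) = cabs (1 - F⁻¹ * A) i j := by
          intro j; simp [hP, cabs, Matrix.fromBlocks_apply₂₁]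
        have s1 : ∑ j : Fin n, P (Sum.inr i) (Sum.inr j) * u j = 0 :=
          Finset.sum_eq_zero fun j _ => by rw [e2 j, zero_mul]
        have s2 : ∑ j : Fin n, P (Sum.inr i) (Sum.inl j) * u j
            = ∑ j : Fin n, cabs (1 - F⁻¹ * A) i j * u j :=
          Finset.sum_congr rfl fun j _ => by rw [e3 j]
        rw [e1, s1, s2, add_zero]
        exact hGF i
    exact lt_of_le_of_lt (specRad_le_of_posVec P hPnn w hwpos θ hθ0 hPw) hθ1
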